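/- Let μ ∈ ℝ, let L be a bounded linear operator on L^∞(𝕋) with ‖Lf(x) − Lf(y)‖ ≤ C‖f‖_∞ |x−y| for all x, y (Lipschitz smoothing), and let φ ∈ L^∞(𝕋) satisfy (1/2)(2μ − φ(x) − φ(y))(φ(x) − φ(y)) = Lφ(x) − Lφ(y) for all x, y, together with φ ≤ μ. Then (1/2)(φ(x) − φ(y))² ≤ C‖φ‖_∞|x−y| for all x, y; in particular, φ is (1/2)-Hölder continuous with |φ(x) − φ(y)| ≤ (2C‖φ‖_∞)^{1/2} |x−y|^{1/2}. -/
import Mathlib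


/-- Bounded solutions of the steady equation with a Lipschitz-smoothing operator `L`
are `1/2`-Hölder continuous. -/
theorem half_holder_regularity
    (L : (ℝ → ℝ) → (ℝ → ℝ)) (μ C M : ℝ) (φ : ℝ → ℝ)
    (hLip : ∀ f : ℝ → ℝ, ∀ M' : ℝ, (∀ z, |f z| ≤ M') →
      ∀ x y, |L f x - L f y| ≤ C * M' * |x - y|)
    (hM : ∀ z, |φ z| ≤ M)
    (hφle : ∀ x, φ x ≤ μ)
    (heq : ∀ x y, (1/2) * (2 * μ - φ x - φ y) * (φ x - φ y) = L φ x - L φ y) :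
    (∀ x y, (1/2) * (φ x - φ y)^2 ≤ C * M * |x - y|) ∧
    (∀ x y, |φ x - φ y| ≤ Real.sqrt (2 * C * M) * Real.sqrt |x - y|) := by
  have key : ∀ x y, (1/2) * (φ x - φ y)^2 ≤ C * M * |x - y| := by
    intro x y
    have h1 : |φ x - φ y| ≤ 2 * μ - φ x - φ y := by
      have hx := hφle x
      have hy := hφle y
      rcases abs_cases (φ x - φ y) with ⟨h, _⟩ | ⟨h, _⟩ <;> linarith
    have h2 : (1/2) * (φ x - φ y)^2 ≤ |(1/2) * (2 * μ - φ x - φ y) * (φ x - φ y)| := by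
      rw [abs_mul, abs_mul, abs_of_pos (by norm_num : (0:ℝ) < 1/2)]
      have h0 : (0:ℝ) ≤ |φ x - φ y| := abs_nonneg _
      have h3 : |φ x - φ y| ≤ |2 * μ - φ x - φ y| := h1.trans (le_abs_self _)
      nlinarith [abs_mul_abs_self (φ x - φ y)]
    calc (1/2) * (φ x - φ y)^2 ≤ |(1/2) * (2 * μ - φ x - φ y) * (φ x - φ y)| := h2
      _ = |L φ x - L φ y| := by rw [heq]
      _ ≤ C * M * |x - y| := hLip φ M hM x y
  refine ⟨key, fun x y => ?_⟩
  have h := key x y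
  have h2 : (φ x - φ y)^2 ≤ 2 * C * M * |x - y| := by linarith
  have := Real.sqrt_le_sqrt h2
  rw [Real.sqrt_sq_eq_abs] at this
  calc |φ x - φ y| ≤ Real.sqrt (2 * C * M * |x - y|) := this
    _ = Real.sqrt (2 * C * M) * Real.sqrt |x - y| := Real.sqrt_mul' _ (abs_nonneg _)
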